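/- arXiv:1211.2633 — 2 statements merged into one kernel-verified Lean document; each statement's English description precedes it below -/
import Mathlib

section
/- The mask m₀(χ) = (1/p) Σ_{h∈H₀^{(N+1)}} β_h conj((χA^{−1}, h)) is periodic with respect to every character of the form r₁^{α₁} r₂^{α₂} ⋯ r_s^{α_s}: m₀(χ · r₁^{α₁}⋯r_s^{α_s}) = m₀(χ) for all χ ∈ X, s ∈ ℕ, α_j ∈ {0,...,p−1}. -/
open MeasureTheory Complex
open scoped ENNReal Classical

noncomputable section

/-- The group of (not necessarily continuous) characters of `G`, with values in the circle. -/
abbrev DualG (G : Type*) [AddCommGroup G] := AddChar G Circle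

variable {G : Type*} [AddCommGroup G]

/-- Annihilator of a subgroup `H` in the character group:
`H^⊥ = {χ : χ(x) = 1 for all x ∈ H}`. -/
def ann (H : AddSubgroup G) : Set (DualG G) := {χ : DualG G | ∀ x ∈ H, χ x = 1}

/-- The action of the `n`-th power of the dilation `A` on characters: `(χAⁿ)(x) = χ(Aⁿ x)`. -/
def dilDual (A : AddAut G) (n : ℤ) (χ : DualG G) : DualG G :=
  χ.compAddMonoidHom (n • A : AddAut G).toAddMonoidHom

variable [MeasurableSpace G]

/-- The Fourier transform `f̂(χ) = ∫ f(x) conj(χ(x)) dμ(x)`. -/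
def fourierT (μ : Measure G) (f : G → ℂ) (χ : DualG G) : ℂ :=
  ∫ x, f x * star ((χ x : ℂ)) ∂μ

/-- The set `H₀` of all finite combinations `a₋₁g₋₁ ∔ … ∔ a₋ₛg₋ₛ`, `0 ≤ aⱼ ≤ p-1`,
of the basic elements with negative indices (the analogue of `ℕ`). -/
def H0 (gen : ℤ → G) (p : ℕ) : Set G :=
  {h | ∃ (s : ℕ) (a : ℕ → ℕ), (∀ j, a j < p) ∧
    h = ∑ j ∈ Finset.range s, a j • gen (-(j : ℤ) - 1)}

/-- The set `H₀⁽ˢ⁾` of combinations using only the generators `g₋₁, …, g₋ₛ`. -/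
def H0N (gen : ℤ → G) (p s : ℕ) : Set G :=
  {h | ∃ a : ℕ → ℕ, (∀ j, a j < p) ∧
    h = ∑ j ∈ Finset.range s, a j • gen (-(j : ℤ) - 1)}

/-- `f` is a step function supported in `Gsupp` and constant on cosets of `Gconst`
(the class `𝔇` of the paper: `f ∈ 𝔇_{Gconst}(Gsupp)`). -/
def IsStep (Gsupp Gconst : AddSubgroup G) (f : G → ℂ) : Prop :=
  (∀ x, x ∉ Gsupp → f x = 0) ∧ ∀ x : G, ∀ g ∈ Gconst, f (x + g) = f x

/-- `F` (a function on the dual group) is supported in the annihilator `Hsupp^⊥` and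
constant on cosets of the annihilator `Hconst^⊥`. -/
def IsStepDual (Hsupp Hconst : AddSubgroup G) (F : DualG G → ℂ) : Prop :=
  (∀ χ, χ ∉ ann Hsupp → F χ = 0) ∧
    ∀ χ : DualG G, ∀ η ∈ ann Hconst, F (η * χ) = F χ

/-- The system of shifts of `ψ` by the elements of `H` is orthonormal in `L²(μ)`. -/
def orthShifts (μ : Measure G) (H : Set G) (ψ : G → ℂ) : Prop :=
  ∀ h ∈ H, ∀ g ∈ H, ∫ x, ψ (x - h) * star (ψ (x - g)) ∂μ = if h = g then 1 else 0

/-- The space `Vₙ`: the closed linear span in `L²(μ)` of the shifts of `φ(Aⁿ ·)`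
by the elements of `H`. -/
def Vsp (μ : Measure G) (A : AddAut G) (H : Set G) (φ : G → ℂ) (n : ℤ) :
    Submodule ℂ (Lp ℂ 2 μ) :=
  (Submodule.span ℂ
    {f : Lp ℂ 2 μ | ∃ h ∈ H, ∀ᵐ x ∂μ, f x = φ ((n • A) x - h)}).topologicalClosure

/-- `φ` generates an orthogonal MRA: the spaces `Vₙ` are nested (A1), their union is
dense and their intersection is trivial (A2), and the `H`-shifts of `φ` form an
orthonormal system spanning `V₀` (A5); axioms A3, A4 hold by the definition of `Vₙ`. -/
def GeneratesMRA (μ : Measure G) (A : AddAut G) (H : Set G) (φ : G → ℂ) : Prop :=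
  (∀ n : ℤ, Vsp μ A H φ n ≤ Vsp μ A H φ (n + 1)) ∧
  (⨆ n : ℤ, Vsp μ A H φ n).topologicalClosure = ⊤ ∧
  (⨅ n : ℤ, Vsp μ A H φ n) = ⊥ ∧
  orthShifts μ H φ


/-- The mask `m₀(χ) = (1/p) Σ_{h∈H₀^{(N+1)}} β_h conj((χA⁻¹, h))` is
periodic with every period `r₁^{α₁} r₂^{α₂} ⋯ r_s^{α_s}`. -/
theorem mask_periodic
    {G : Type*} [AddCommGroup G] [TopologicalSpace G] [IsTopologicalAddGroup G]
    [LocallyCompactSpace G] [TotallyDisconnectedSpace G] [MeasurableSpace G]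
    (Gsub : ℤ → AddSubgroup G)
    (hchain : ∀ n : ℤ, (Gsub (n + 1) : Set G) ⊆ Gsub n)
    (hcompact : ∀ n : ℤ, IsCompact (Gsub n : Set G))
    (hopen : ∀ n : ℤ, IsOpen (Gsub n : Set G))
    (hunion : (⋃ n : ℤ, (Gsub n : Set G)) = Set.univ)
    (hinter : (⋂ n : ℤ, (Gsub n : Set G)) = {0})
    (μ : Measure G)
    (hμinv : ∀ (g : G) (s : Set G), μ ((g + ·) '' s) = μ s)
    (p : ℕ) (hp : p.Prime)
    (hindex : ∀ n : ℤ, (Gsub (n + 1)).relIndex (Gsub n) = p)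
    (hμnorm : ∀ n : ℤ, μ (Gsub n : Set G) = (p : ℝ≥0∞) ^ (-n))
    (gen : ℤ → G) (hgen : ∀ n : ℤ, gen n ∈ (Gsub n : Set G) \ (Gsub (n + 1) : Set G))
    (A : AddAut G) (hA : ∀ n : ℤ, (A : G → G) '' (Gsub n) = Gsub (n - 1))
    (hAgen : ∀ n : ℤ, A (gen n) = gen (n - 1))
    (hVil : ∀ n : ℤ, p • gen n = 0)
    (r : ℤ → DualG G)
    (hrmem : ∀ n : ℤ, r n ∈ ann (Gsub (n + 1)) \ ann (Gsub n))
    (hr : ∀ n k : ℤ, r n (gen k) =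
      Circle.exp (2 * Real.pi * (if n = k then 1 else 0) / p))
    (N : ℕ) (β : G → ℂ) (m0 : DualG G → ℂ)
    (hm0 : ∀ χ : DualG G, m0 χ =
      (1 / (p : ℂ)) * ∑' h : H0N gen p (N + 1),
        β (h : G) * star (((dilDual A (-1) χ) (h : G) : ℂ))) :
    ∀ (χ : DualG G) (s : ℕ) (α : ℕ → ℕ), (∀ j, α j < p) →
      m0 (χ * ∏ j ∈ Finset.range s, (r ((j : ℤ) + 1)) ^ (α j)) = m0 χ := by
  intro χ s α hα
  rw [hm0, hm0]
  congr 1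
  apply tsum_congr
  rintro ⟨h, a, ha, rfl⟩
  congr 2
  simp only [dilDual, AddChar.compAddMonoidHom_apply, AddEquiv.toAddMonoidHom_eq_coe,
    AddMonoidHom.coe_coe]
  have hAinv : ∀ k : ℤ, ((-1 : ℤ) • A : AddAut G) (gen k) = gen (k + 1) := by
    intro k
    have := hAgen (k + 1)
    simp only [add_sub_cancel_right] at this
    rw [neg_one_zsmul]
    exact (AddEquiv.symm_apply_eq _).mpr this.symm
  set x := ((-1 : ℤ) • A : AddAut G) (∑ j ∈ Finset.range (N + 1), a j • gen (-(j : ℤ) - 1))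
  have hx : x = ∑ j ∈ Finset.range (N + 1), a j • gen (-(j : ℤ)) := by
    show (((-1 : ℤ) • A : AddAut G) : G ≃+ G) _ = _
    rw [map_sum]
    refine Finset.sum_congr rfl fun j _ => ?_
    rw [map_nsmul]
    congr 1
    have := hAinv (-(j : ℤ) - 1)
    simpa using this
  have key : ∀ j ∈ Finset.range s, ((r ((j : ℤ) + 1)) ^ (α j)) x = 1 := by
    intro j _
    rw [AddChar.pow_apply, hx]
    have : ∀ m : ℕ, (r ((j : ℤ) + 1)) (∑ k ∈ Finset.range m, a k • gen (-(k : ℤ))) = 1 := by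
      intro m
      induction m with
      | zero => simp
      | succ n ih =>
        rw [Finset.sum_range_succ, AddChar.map_add_eq_mul, ih, one_mul,
          AddChar.map_nsmul_eq_pow, hr, if_neg (by omega)]
        norm_num
    rw [this, one_pow]
  have hprod : (∏ j ∈ Finset.range s, (r ((j : ℤ) + 1)) ^ (α j)) x = 1 := by
    induction s with
    | zero => simp
    | succ n ih =>
      rw [Finset.prod_range_succ, AddChar.mul_apply,
        ih (fun j hj => key j (Finset.mem_range.mpr (by
          have := Finset.mem_range.mp hj; omega))),
        key n (Finset.mem_range.mpr (by omega)), one_mul]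
  rw [AddChar.mul_apply, hprod, mul_one]
end
end

section
/- A function m₀ on the dual group X satisfying: (T1) m₀ is constant on cosets of G_{-N}^⊥, (T2) m₀ is periodic with every period r₁^{α₁}⋯r_s^{α_s}, (T3) m₀ ≡ 1 on G_{-N}^⊥, is the mask of a refinement equation with solution φ̂ ∈ D_{-N}(G_M^⊥) if and only if ∪_{k=-N+1}^{M+1} E_k A^{M+1−k} = G_{M+1}^⊥ \ G_M^⊥, where E_k ⊆ G_k^⊥ \ G_{k−1}^⊥ is the zero set of m₀ there (equivalently, m₀(χ)·m₀(χA^{−1})⋯m₀(χA^{−M−N}) = 0 for all χ ∈ G_{M+1}^⊥ \ G_M^⊥). -/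
open MeasureTheory Complex
open scoped ENNReal Classical

noncomputable section

variable {G : Type*} [AddCommGroup G]

variable [MeasurableSpace G]

lemma dilDual_apply (A : AddAut G) (n : ℤ) (χ : DualG G) (x : G) :
    dilDual A n χ x = χ ((n • A) x) := rfl

lemma dilDual_comp (A : AddAut G) (m n : ℤ) (χ : DualG G) :
    dilDual A m (dilDual A n χ) = dilDual A (n + m) χ := by
  ext x
  simp only [dilDual_apply, add_zsmul, AddAut.mul_apply]

lemma dilDual_zero (A : AddAut G) (χ : DualG G) :
    dilDual A 0 χ = χ := by
  ext x
  simp [dilDual_apply]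

lemma dilDual_mul (A : AddAut G) (n : ℤ) (η χ : DualG G) :
    dilDual A n (η * χ) = dilDual A n η * dilDual A n χ := by
  ext x
  simp [dilDual_apply]


/-- The partial product `m₀(χ)·m₀(χA⁻¹)⋯m₀(χA^{-(n-1)})`. -/
def maskProd (A : AddAut G) (m0 : DualG G → ℂ) (χ : DualG G) (n : ℕ) : ℂ :=
  ∏ j ∈ Finset.range n, m0 (dilDual A (-(j : ℤ)) χ)

lemma maskProd_succ (A : AddAut G) (m0 : DualG G → ℂ) (χ : DualG G) (n : ℕ) :
    maskProd A m0 χ (n + 1) = maskProd A m0 χ n * m0 (dilDual A (-(n : ℤ)) χ) :=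
  Finset.prod_range_succ _ _

lemma maskProd_succ' (A : AddAut G) (m0 : DualG G → ℂ) (χ : DualG G) (n : ℕ) :
    maskProd A m0 χ (n + 1) = m0 χ * maskProd A m0 (dilDual A (-1) χ) n := by
  unfold maskProd
  rw [Finset.prod_range_succ']
  have h0 : m0 (dilDual A (-((0 : ℕ) : ℤ)) χ) = m0 χ := by norm_num [dilDual_zero]
  have hterm : ∀ i : ℕ, m0 (dilDual A (-(((i : ℕ) + 1 : ℕ) : ℤ)) χ)
      = m0 (dilDual A (-(i : ℤ)) (dilDual A (-1) χ)) := by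
    intro i
    rw [dilDual_comp, show (-1 : ℤ) + -(i : ℤ) = -(((i : ℕ) + 1 : ℕ) : ℤ) from by
      push_cast; ring]
  rw [h0, mul_comm]
  congr 1
  exact Finset.prod_congr rfl (fun i _ => hterm i)

lemma maskProd_iter (A : AddAut G) (m0 : DualG G → ℂ) (F : DualG G → ℂ)
    (hF : ∀ χ, F χ = m0 χ * F (dilDual A (-1) χ)) :
    ∀ (n : ℕ) (χ : DualG G), F χ = maskProd A m0 χ n * F (dilDual A (-(n : ℤ)) χ) := by
  intro n
  induction n with
  | zero => intro χ; simp [maskProd, dilDual_zero]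
  | succ n ih =>
    intro χ
    have hidx : (-(((n : ℕ) + 1 : ℕ)) : ℤ) = -(n : ℤ) + -1 := by push_cast; ring
    rw [hidx, maskProd_succ, ih χ, hF (dilDual A (-(n : ℤ)) χ), dilDual_comp]
    ring

/-- A function `m₀` satisfying (T1) constancy on cosets of `G₋ₙ^⊥`,
(T2) periodicity with periods `r₁^{α₁}⋯r_s^{α_s}`, (T3) `m₀ ≡ 1` on `G₋ₙ^⊥`, is the mask
of a refinement equation with a solution `φ̂ ∈ 𝔇₋ₙ(G_M^⊥)` iff
`⋃_{k=-N+1}^{M+1} E_k A^{M+1−k} = G_{M+1}^⊥ \ G_M^⊥`,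
where `E_k` is the zero set of `m₀` in `G_k^⊥ \ G_{k−1}^⊥`. -/
theorem mask_criterion
    {G : Type*} [AddCommGroup G] [TopologicalSpace G] [IsTopologicalAddGroup G]
    [LocallyCompactSpace G] [TotallyDisconnectedSpace G] [MeasurableSpace G]
    (Gsub : ℤ → AddSubgroup G)
    (hchain : ∀ n : ℤ, (Gsub (n + 1) : Set G) ⊆ Gsub n)
    (hcompact : ∀ n : ℤ, IsCompact (Gsub n : Set G))
    (hopen : ∀ n : ℤ, IsOpen (Gsub n : Set G))
    (hunion : (⋃ n : ℤ, (Gsub n : Set G)) = Set.univ)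
    (hinter : (⋂ n : ℤ, (Gsub n : Set G)) = {0})
    (μ : Measure G)
    (hμinv : ∀ (g : G) (s : Set G), μ ((g + ·) '' s) = μ s)
    (p : ℕ) (hp : p.Prime)
    (hindex : ∀ n : ℤ, (Gsub (n + 1)).relIndex (Gsub n) = p)
    (hμnorm : ∀ n : ℤ, μ (Gsub n : Set G) = (p : ℝ≥0∞) ^ (-n))
    (gen : ℤ → G) (hgen : ∀ n : ℤ, gen n ∈ (Gsub n : Set G) \ (Gsub (n + 1) : Set G))
    (A : AddAut G) (hA : ∀ n : ℤ, (A : G → G) '' (Gsub n) = Gsub (n - 1))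
    (hAgen : ∀ n : ℤ, A (gen n) = gen (n - 1))
    (hVil : ∀ n : ℤ, p • gen n = 0)
    (r : ℤ → DualG G)
    (hrmem : ∀ n : ℤ, r n ∈ ann (Gsub (n + 1)) \ ann (Gsub n))
    (hr : ∀ n k : ℤ, r n (gen k) =
      Circle.exp (2 * Real.pi * (if n = k then 1 else 0) / p))
    (M N : ℕ) (m0 : DualG G → ℂ)
    (hT1 : ∀ χ : DualG G, ∀ η ∈ ann (Gsub (-(N : ℤ))), m0 (η * χ) = m0 χ)
    (hT2 : ∀ (χ : DualG G) (s : ℕ) (α : ℕ → ℕ), (∀ j, α j < p) →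
      m0 (χ * ∏ j ∈ Finset.range s, (r ((j : ℤ) + 1)) ^ (α j)) = m0 χ)
    (hT3 : ∀ χ ∈ ann (Gsub (-(N : ℤ))), m0 χ = 1) :
    (∃ F : DualG G → ℂ,
        IsStepDual (Gsub (M : ℤ)) (Gsub (-(N : ℤ))) F ∧
        (∀ χ ∈ ann (Gsub (-(N : ℤ))), F χ = 1) ∧
        ∀ χ : DualG G, F χ = m0 χ * F (dilDual A (-1) χ)) ↔
      (⋃ k ∈ Finset.Icc (-(N : ℤ) + 1) ((M : ℤ) + 1),
          dilDual A ((M : ℤ) + 1 - k) ''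
            {χ : DualG G | χ ∈ ann (Gsub k) \ ann (Gsub (k - 1)) ∧ m0 χ = 0})
        = ann (Gsub ((M : ℤ) + 1)) \ ann (Gsub (M : ℤ)) := by

  classical
  -- basic dilation facts
  have hA1 : ∀ (m : ℤ) (x : G), A x ∈ Gsub m ↔ x ∈ Gsub (m + 1) := by
    intro m x
    have him : (A : G → G) '' (Gsub (m + 1)) = (Gsub (m + 1 - 1) : Set G) := hA (m + 1)
    rw [show m + 1 - 1 = m from by ring] at him
    constructor
    · intro hx
      have hx' : A x ∈ (A : G → G) '' (Gsub (m + 1)) := by rw [him]; exact hx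
      obtain ⟨y, hy, hyx⟩ := hx'
      have hyx' : y = x := A.injective hyx
      rwa [← hyx']
    · intro hx
      have : A x ∈ (A : G → G) '' (Gsub (m + 1)) := ⟨x, hx, rfl⟩
      rwa [him] at this
  have hAinv : ∀ (k : ℤ) (x : G), (-A) x ∈ Gsub k ↔ x ∈ Gsub (k - 1) := by
    intro k x
    have h := hA1 (k - 1) ((-A) x)
    rw [show k - 1 + 1 = k from by ring] at h
    have hAx : A ((-A) x) = x := by simp
    rw [hAx] at h
    exact h.symm
  have hApow : ∀ (n m : ℤ) (x : G), (n • A) x ∈ Gsub m ↔ x ∈ Gsub (m + n) := by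
    intro n
    induction n using Int.induction_on with
    | zero => intro m x; simp
    | succ i ih =>
      intro m x
      have hx : (((i : ℤ) + 1) • A) x = ((i : ℤ) • A) (A x) := by
        rw [add_one_zsmul, AddAut.mul_apply]
      rw [hx, ih m (A x), hA1, show m + (i : ℤ) + 1 = m + ((i : ℤ) + 1) from by ring]
    | pred i ih =>
      intro m x
      have hx : ((-(i : ℤ) - 1) • A) x = ((-(i : ℤ)) • A) ((-A) x) := by
        rw [sub_one_zsmul, AddAut.mul_apply]
      rw [hx, ih m ((-A) x), hAinv, show m + -(i : ℤ) - 1 = m + (-(i : ℤ) - 1) from by ring]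
  have hchain' : ∀ k m : ℤ, k ≤ m → (Gsub m : Set G) ⊆ (Gsub k : Set G) := by
    intro k m hkm
    obtain ⟨d, rfl⟩ := Int.le.dest hkm
    clear hkm
    induction d with
    | zero => simp
    | succ n ih =>
      have h2 : k + ((n + 1 : ℕ) : ℤ) = k + (n : ℤ) + 1 := by push_cast; ring
      rw [h2]
      exact (hchain (k + (n : ℤ))).trans ih
  have hann_mono : ∀ k m : ℤ, k ≤ m → ann (Gsub k) ⊆ ann (Gsub m) := by
    intro k m hkm χ hχ x hx
    exact hχ x (hchain' k m hkm hx)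
  have hann_dil : ∀ (n m : ℤ) (χ : DualG G),
      dilDual A n χ ∈ ann (Gsub m) ↔ χ ∈ ann (Gsub (m - n)) := by
    intro n m χ
    constructor
    · intro h y hy
      have hx : ((-n) • A) y ∈ Gsub m := by
        rw [hApow, show m + -n = m - n from by ring]
        exact hy
      have h2 := h _ hx
      rw [dilDual_apply] at h2
      have h3 : (n • A) (((-n) • A) y) = y := by
        rw [← AddAut.mul_apply, ← add_zsmul]
        simp
      rwa [h3] at h2
    · intro h x hx
      have hx' : (n • A) x ∈ Gsub (m - n) := by
        rw [hApow, show m - n + n = m from by ring]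
        exact hx
      exact h _ hx'
  have hmemiff : ∀ (H : AddSubgroup G) (η χ : DualG G), η ∈ ann H →
      ((η * χ) ∈ ann H ↔ χ ∈ ann H) := by
    intro H η χ hη
    constructor
    · intro h x hx
      have h1 := h x hx
      have h2 := hη x hx
      rw [AddChar.mul_apply, h2, one_mul] at h1
      exact h1
    · intro h x hx
      rw [AddChar.mul_apply, hη x hx, h x hx, one_mul]
  constructor
  · rintro ⟨F, ⟨hFsupp, hFconst⟩, hFone, hFref⟩
    apply Set.Subset.antisymm
    · -- the union is always contained in the annulus
      intro χ hχ
      simp only [Set.mem_iUnion, Set.mem_image, Set.mem_setOf_eq, Set.mem_diff,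
        exists_prop] at hχ
      obtain ⟨k, hk, ψ, ⟨⟨hψ1, hψ2⟩, hψ0⟩, rfl⟩ := hχ
      rw [Set.mem_diff]
      constructor
      · rw [hann_dil, show (M : ℤ) + 1 - ((M : ℤ) + 1 - k) = k from by ring]
        exact hψ1
      · intro hc
        rw [hann_dil, show (M : ℤ) - ((M : ℤ) + 1 - k) = k - 1 from by ring] at hc
        exact hψ2 hc
    · -- the annulus is contained in the union, using F
      intro χ hχ
      rw [Set.mem_diff] at hχ
      obtain ⟨hχ1, hχ2⟩ := hχ
      have h0 : F χ = 0 := hFsupp χ hχ2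
      have hiter := maskProd_iter A m0 F hFref (M + N + 1) χ
      have hmem : dilDual A (-((M + N + 1 : ℕ) : ℤ)) χ ∈ ann (Gsub (-(N : ℤ))) := by
        rw [hann_dil, show -(N : ℤ) - -(((M + N + 1 : ℕ) : ℤ)) = (M : ℤ) + 1 from by
          push_cast; ring]
        exact hχ1
      rw [hFone _ hmem, mul_one, h0] at hiter
      unfold maskProd at hiter
      obtain ⟨j, hj, hj0⟩ := Finset.prod_eq_zero_iff.mp hiter.symm
      have hj' : j < M + N + 1 := Finset.mem_range.mp hj
      simp only [Set.mem_iUnion, Set.mem_image, Set.mem_setOf_eq, Set.mem_diff,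
        exists_prop]
      refine ⟨(M : ℤ) + 1 - (j : ℤ), ?_, dilDual A (-(j : ℤ)) χ, ⟨⟨?_, ?_⟩, hj0⟩, ?_⟩
      · rw [Finset.mem_Icc]
        omega
      · rw [hann_dil, show (M : ℤ) + 1 - (j : ℤ) - -(j : ℤ) = (M : ℤ) + 1 from by ring]
        exact hχ1
      · intro hc
        rw [hann_dil, show (M : ℤ) + 1 - (j : ℤ) - 1 - -(j : ℤ) = (M : ℤ) from by ring] at hc
        exact hχ2 hc
      · rw [dilDual_comp,
          show -(j : ℤ) + ((M : ℤ) + 1 - ((M : ℤ) + 1 - (j : ℤ))) = 0 from by ring,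
          dilDual_zero]
  · intro hU
    refine ⟨fun χ => if χ ∈ ann (Gsub (M : ℤ)) then maskProd A m0 χ (M + N) else 0,
      ⟨fun χ hχ => ?_, fun χ η hη => ?_⟩, fun χ hχ => ?_, fun χ => ?_⟩
    · exact if_neg hχ
    · -- constancy on cosets of ann (Gsub (-N))
      beta_reduce
      have hηM : η ∈ ann (Gsub (M : ℤ)) := hann_mono _ _ (by omega) hη
      by_cases hχM : χ ∈ ann (Gsub (M : ℤ))
      · rw [if_pos hχM, if_pos ((hmemiff _ η χ hηM).mpr hχM)]
        unfold maskProd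
        apply Finset.prod_congr rfl
        intro j _
        rw [dilDual_mul]
        apply hT1
        rw [hann_dil]
        exact hann_mono _ _ (by omega) hη
      · rw [if_neg hχM, if_neg (fun hc => hχM ((hmemiff _ η χ hηM).mp hc))]
    · -- F = 1 on ann (Gsub (-N))
      beta_reduce
      have hχM : χ ∈ ann (Gsub (M : ℤ)) := hann_mono _ _ (by omega) hχ
      rw [if_pos hχM]
      unfold maskProd
      apply Finset.prod_eq_one
      intro j _
      apply hT3
      rw [hann_dil]
      exact hann_mono _ _ (by omega) hχ
    · -- refinement equation
      beta_reduce
      by_cases hA1χ : dilDual A (-1) χ ∈ ann (Gsub (M : ℤ))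
      · have hkey : m0 χ * (if dilDual A (-1) χ ∈ ann (Gsub (M : ℤ)) then
            maskProd A m0 (dilDual A (-1) χ) (M + N) else 0) = maskProd A m0 χ (M + N + 1) := by
          rw [if_pos hA1χ, maskProd_succ']
        by_cases hχM : χ ∈ ann (Gsub (M : ℤ))
        · rw [if_pos hχM, hkey, maskProd_succ]
          have h1 : m0 (dilDual A (-((M + N : ℕ) : ℤ)) χ) = 1 := by
            apply hT3
            rw [hann_dil, show -(N : ℤ) - -(((M + N : ℕ) : ℤ)) = (M : ℤ) from by
              push_cast; ring]
            exact hχM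
          rw [h1, mul_one]
        · have hχM1 : χ ∈ ann (Gsub ((M : ℤ) + 1)) := by
            have h := (hann_dil (-1) (M : ℤ) χ).mp hA1χ
            rwa [show (M : ℤ) - (-1) = (M : ℤ) + 1 from by ring] at h
          have hχU : χ ∈ ⋃ k ∈ Finset.Icc (-(N : ℤ) + 1) ((M : ℤ) + 1),
              dilDual A ((M : ℤ) + 1 - k) ''
                {χ : DualG G | χ ∈ ann (Gsub k) \ ann (Gsub (k - 1)) ∧ m0 χ = 0} := by
            rw [hU, Set.mem_diff]
            exact ⟨hχM1, hχM⟩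
          simp only [Set.mem_iUnion, Set.mem_image, Set.mem_setOf_eq, Set.mem_diff,
            exists_prop] at hχU
          obtain ⟨k, hk, ψ, ⟨⟨hψ1, hψ2⟩, hψ0⟩, hψχ⟩ := hχU
          have hk' := Finset.mem_Icc.mp hk
          set j : ℕ := ((M : ℤ) + 1 - k).toNat with hj
          have hjz : ((j : ℕ) : ℤ) = (M : ℤ) + 1 - k := Int.toNat_of_nonneg (by omega)
          have hψeq : dilDual A (-(j : ℤ)) χ = ψ := by
            rw [← hψχ, dilDual_comp, show ((M : ℤ) + 1 - k) + -(j : ℤ) = 0 from by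
              rw [hjz]; ring, dilDual_zero]
          have hjlt : j < M + N + 1 := by omega
          rw [if_neg hχM, hkey]
          symm
          unfold maskProd
          apply Finset.prod_eq_zero (Finset.mem_range.mpr hjlt)
          rw [hψeq]
          exact hψ0
      · have hχM : χ ∉ ann (Gsub (M : ℤ)) := by
          intro hc
          apply hA1χ
          rw [hann_dil, show (M : ℤ) - (-1) = (M : ℤ) + 1 from by ring]
          exact hann_mono _ _ (by omega) hc
        rw [if_neg hχM, if_neg hA1χ, mul_zero]
end
end
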